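/- arXiv:math/0312078 — 2 statements merged into one kernel-verified Lean document; each statement's English description precedes it below -/
import Mathlib

section
/- Let C_1, ..., C_r be vectors in an inner-product-like real vector space with symmetric bilinear form ⟨·,·⟩ such that ⟨C_i, C_j⟩ ≥ 0 for i ≠ j and the Gram matrix is negative definite. If E = x_1 C_1 + ... + x_r C_r satisfies ⟨E, C_i⟩ ≤ 0 for all i, then x_i ≥ 0 for all i. -/
/-- A finite family of vectors is *negative definite* (for a symmetric bilinear
form `B`) if its Gram matrix `(B (C i) (C j))` is negative definite, i.e. its
negation is positive definite. -/
def NegDefFamily {V : Type*} [AddCommGroup V] [Module ℝ V]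
    (B : LinearMap.BilinForm ℝ V) {r : ℕ} (C : Fin r → V) : Prop :=
  (-(Matrix.of fun i j => B (C i) (C j))).PosDef

/-- If `B (C i) (C j) ≥ 0` for `i ≠ j`, the Gram matrix of the `C i` is negative
definite, and `E = ∑ x i • C i` satisfies `B E (C i) ≤ 0` for all `i`, then all
coefficients `x i` are nonnegative. -/
theorem stmt4 {V : Type*} [AddCommGroup V] [Module ℝ V]
    (B : LinearMap.BilinForm ℝ V) (hB : ∀ u v : V, B u v = B v u)
    {r : ℕ} (C : Fin r → V)
    (hoff : ∀ i j : Fin r, i ≠ j → 0 ≤ B (C i) (C j))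
    (hneg : NegDefFamily B C)
    (x : Fin r → ℝ) (E : V) (hE : E = ∑ i, x i • C i)
    (hEC : ∀ i : Fin r, B E (C i) ≤ 0) :
    ∀ i : Fin r, 0 ≤ x i := by
  have hneg2 : (-(Matrix.of fun i j => B (C i) (C j))).PosDef := hneg
  classical
  set n : Fin r → ℝ := fun i => max (-(x i)) 0 with hn
  set p : Fin r → ℝ := fun i => max (x i) 0 with hp
  have hnnn : ∀ i, 0 ≤ n i := fun i => le_max_right _ _
  have hnp : ∀ i, 0 ≤ p i := fun i => le_max_right _ _
  have hxpn : ∀ i, x i = p i - n i := by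
    intro i; simp [hn, hp, max_zero_sub_max_neg_zero_eq_self]
  have hpn0 : ∀ i, p i * n i = 0 := by
    intro i
    rcases le_total (x i) 0 with h | h
    · have : p i = 0 := by simp [hp, h]
      simp [this]
    · have : n i = 0 := by simp [hn, neg_nonpos.mpr h]
      simp [this]
  have hn0 : n = 0 := by
    by_contra h0
    have hpos := hneg2.dotProduct_mulVec_pos h0
    -- rewrite quadratic form
    have hq : dotProduct (star n) ((-(Matrix.of fun i j => B (C i) (C j))).mulVec n)
        = -(∑ i, ∑ j, n i * (n j * B (C i) (C j))) := by
      simp [dotProduct, Matrix.mulVec, Finset.mul_sum, mul_comm, mul_left_comm]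
    rw [hq] at hpos
    have hlt : (∑ i, ∑ j, n i * (n j * B (C i) (C j))) < 0 := by linarith
    set N : V := ∑ i, n i • C i with hN
    set P : V := ∑ i, p i • C i with hP
    have hBNN : B N N = ∑ i, ∑ j, n i * (n j * B (C i) (C j)) := by
      simp only [hN, map_sum, LinearMap.sum_apply, map_smul, LinearMap.smul_apply,
        smul_eq_mul, Finset.mul_sum]
      rw [Finset.sum_comm]
      exact Finset.sum_congr rfl fun i _ => Finset.sum_congr rfl fun j _ => by rw [hB]; ring
    have hNplus : N = P - E := by
      rw [hE, hP, hN, ← Finset.sum_sub_distrib]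
      congr 1; ext i
      rw [← sub_smul]
      congr 1
      rw [hxpn i]; ring
    have hEN : B E N ≤ 0 := by
      have : B E N = ∑ j, n j * B E (C j) := by
        simp [hN, map_sum, map_smul, smul_eq_mul]
      rw [this]
      exact Finset.sum_nonpos fun j _ => mul_nonpos_of_nonneg_of_nonpos (hnnn j) (hEC j)
    have hPN : 0 ≤ B P N := by
      have : B P N = ∑ i, ∑ j, p i * (n j * B (C i) (C j)) := by
        simp only [hP, hN, map_sum, LinearMap.sum_apply, map_smul, LinearMap.smul_apply,
          smul_eq_mul, Finset.mul_sum]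
        rw [Finset.sum_comm]
        exact Finset.sum_congr rfl fun i _ => Finset.sum_congr rfl fun j _ => by rw [hB]; ring
      rw [this]
      apply Finset.sum_nonneg; intro i _
      apply Finset.sum_nonneg; intro j _
      rcases eq_or_ne i j with rfl | hij
      · rw [← mul_assoc, hpn0 i, zero_mul]
      · exact mul_nonneg (hnp i) (mul_nonneg (hnnn j) (hoff i j hij))
    have h1 : B (P - E) N = B P N - B E N := by
      rw [map_sub]; rfl
    have : 0 ≤ B N N := by
      nth_rewrite 1 [hNplus]
      rw [h1]; linarith
    rw [hBNN] at this
    linarith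
  intro i
  have : n i = 0 := congrFun hn0 i
  have := hxpn i
  have hpi := hnp i
  nlinarith [hnp i, hxpn i]
end

section
/- Let C_1, ..., C_r be vectors in a real vector space with symmetric bilinear form such that ⟨C_i, C_j⟩ ≥ 0 for i ≠ j and the Gram matrix is negative definite. If E = x_1 C_1 + ... + x_r C_r satisfies ⟨E, C_i⟩ < 0 for all i, then x_i > 0 for all i. -/
open Matrix in
private lemma mul_nn {a b : ℝ} (ha : a ≤ 0) (hb : b ≤ 0) : 0 ≤ a * b := by nlinarith


/-- Strict version: if `B (C i) (C j) ≥ 0` for `i ≠ j`, the Gram matrix of the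
`C i` is negative definite, and `E = ∑ x i • C i` satisfies `B E (C i) < 0` for
all `i`, then all coefficients `x i` are positive. -/
theorem stmt5 {V : Type*} [AddCommGroup V] [Module ℝ V]
    (B : LinearMap.BilinForm ℝ V) (hB : ∀ u v : V, B u v = B v u)
    {r : ℕ} (C : Fin r → V)
    (hoff : ∀ i j : Fin r, i ≠ j → 0 ≤ B (C i) (C j))
    (hneg : NegDefFamily B C)
    (x : Fin r → ℝ) (E : V) (hE : E = ∑ i, x i • C i)
    (hEC : ∀ i : Fin r, B E (C i) < 0) :
    ∀ i : Fin r, 0 < x i := by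
  classical
  set M : Matrix (Fin r) (Fin r) ℝ := Matrix.of fun i j => B (C i) (C j) with hMdef
  have hMsym : ∀ i j, M i j = M j i := fun i j => hB (C i) (C j)
  have hBE : ∀ i, B E (C i) = ∑ j, x j * M j i := by
    intro i
    simp [hE, hMdef, map_sum, LinearMap.sum_apply, smul_eq_mul]
  -- negative part of x
  set v : Fin r → ℝ := fun i => min (x i) 0 with hvdef
  set w : Fin r → ℝ := fun i => max (x i) 0 with hwdef
  have hxvw : ∀ i, x i = v i + w i := by
    intro i; simp [hvdef, hwdef, min_add_max]
  have hv0 : ∀ i, v i ≤ 0 := fun i => min_le_right _ _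
  have hw0 : ∀ i, 0 ≤ w i := fun i => le_max_right _ _
  have hvw : ∀ i, v i * w i = 0 := by
    intro i
    rcases le_total (x i) 0 with h | h
    · simp [hvdef, hwdef, max_eq_right h, mul_comm]
    · simp [hvdef, hwdef, min_eq_right h]
  -- key quadratic form inequality
  have hquad : 0 ≤ ∑ i, v i * ∑ j, M i j * v j := by
    have hsplit : ∀ i, (∑ j, M i j * v j) =
        (∑ j, x j * M j i) - ∑ j, M i j * w j := by
      intro i
      rw [eq_sub_iff_add_eq, ← Finset.sum_add_distrib]
      apply Finset.sum_congr rfl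
      intro j _
      rw [hMsym i j, hxvw j]; ring
    calc 0 ≤ ∑ i, (v i * ∑ j, x j * M j i - v i * ∑ j, M i j * w j) := by
            apply Finset.sum_nonneg
            intro i _
            have h1 : 0 ≤ v i * ∑ j, x j * M j i := by
              rw [← hBE i]
              exact mul_nn (hv0 i) (hEC i).le
            have h2 : v i * ∑ j, M i j * w j ≤ 0 := by
              rw [Finset.mul_sum]
              apply Finset.sum_nonpos
              intro j _
              rcases eq_or_ne i j with rfl | hij
              · have : v i * (M i i * w i) = M i i * (v i * w i) := by ring
                rw [this, hvw i, mul_zero]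
              · exact mul_nonpos_of_nonpos_of_nonneg (hv0 i)
                  (mul_nonneg (hoff i j hij) (hw0 j))
            linarith
      _ = ∑ i, v i * ∑ j, M i j * v j := by
            apply Finset.sum_congr rfl
            intro i _
            rw [hsplit i]; ring
  -- conclude v = 0 from negative definiteness
  have hvzero : v = 0 := by
    by_contra hv
    have hpos : 0 < dotProduct (star v) ((-M).mulVec v) := Matrix.PosDef.dotProduct_mulVec_pos hneg hv
    have : dotProduct (star v) ((-M).mulVec v) = -(∑ i, v i * ∑ j, M i j * v j) := by
      simp [dotProduct, Matrix.mulVec, Finset.mul_sum, Finset.sum_neg_distrib]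
    rw [this] at hpos
    linarith
  have hxnn : ∀ i, 0 ≤ x i := by
    intro i
    have h := congrFun hvzero i
    simp only [hvdef, Pi.zero_apply] at h
    exact min_eq_right_iff.mp h
  -- diagonal entries are negative
  have hdiag : ∀ i, M i i < 0 := by
    intro i
    have hpos : 0 < dotProduct (star (Pi.single i 1 : Fin r → ℝ)) ((-M).mulVec (Pi.single i 1)) :=
      Matrix.PosDef.dotProduct_mulVec_pos hneg (x := Pi.single i 1) (by
      intro h
      have := congrFun h i
      simp [Pi.single_apply] at this)
    have : dotProduct (star (Pi.single i 1 : Fin r → ℝ)) ((-M).mulVec (Pi.single i 1))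
        = -(M i i) := by
      simp [dotProduct, Matrix.mulVec, Pi.single_apply, Finset.mul_sum]
    rw [this] at hpos
    linarith
  intro i
  have hrest : 0 ≤ ∑ j ∈ Finset.univ.erase i, x j * M j i := by
    apply Finset.sum_nonneg
    intro j hj
    exact mul_nonneg (hxnn j) (hoff j i (Finset.ne_of_mem_erase hj))
  have hsum : x i * M i i + ∑ j ∈ Finset.univ.erase i, x j * M j i = B E (C i) := by
    rw [hBE i]
    exact Finset.add_sum_erase Finset.univ (fun j => x j * M j i) (Finset.mem_univ i)
  have hxM : x i * M i i < 0 := by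
    have := hEC i
    linarith [hsum, hrest]
  by_contra hxi
  push_neg at hxi
  exact absurd hxM (not_lt.mpr (mul_nn hxi (hdiag i).le))
end
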